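/- Let x ∈ ℝⁿ. Then ‖𝒢(x)‖ ≤ dist(0; ∇f(x) + ∂g(x)), where ∇f(x) + ∂g(x) = {∇f(x) + v : v ∈ ∂g(x)}. -/

import Mathlib

open scoped RealInnerProductSpace
open Metric Set Filter

noncomputable section

abbrev En (n : ℕ) : Type := EuclideanSpace ℝ (Fin n)

/-- Convex subdifferential of an extended-real-valued function `g` at `x`. -/
def ESubdiff {n : ℕ} (g : En n → EReal) (x : En n) : Set (En n) :=
  {v | ∀ y, g x + ((⟪v, y - x⟫ : ℝ) : EReal) ≤ g y}

/-- `g` is proper: it never takes the value `-∞` and is finite somewhere. -/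
def ProperFun {n : ℕ} (g : En n → EReal) : Prop :=
  (∀ x, g x ≠ ⊥) ∧ ∃ x, g x ≠ ⊤

/-- Convexity for extended-real-valued functions. -/
def EConvexOn {n : ℕ} (g : En n → EReal) : Prop :=
  ∀ x y : En n, ∀ a b : ℝ, 0 ≤ a → 0 ≤ b → a + b = 1 →
    g (a • x + b • y) ≤ (a : EReal) * g x + (b : EReal) * g y

/-- `p` minimizes `y ↦ g y + ‖y - u‖ ^ 2 / 2`. -/
def IsProxPt {n : ℕ} (g : En n → EReal) (u p : En n) : Prop :=
  ∀ y, g p + ((‖p - u‖ ^ 2 / 2 : ℝ) : EReal) ≤ g y + ((‖y - u‖ ^ 2 / 2 : ℝ) : EReal)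

/-- `prox` maps each `u` to the unique minimizer of `y ↦ g y + ‖y - u‖ ^ 2 / 2`. -/
def IsProxMap {n : ℕ} (g : En n → EReal) (prox : En n → En n) : Prop :=
  ∀ u, IsProxPt g u (prox u) ∧ ∀ p, IsProxPt g u p → p = prox u

/-- The solution set `𝒳* = argmin (f + g)`. -/
def ArgminSet {n : ℕ} (f : En n → ℝ) (g : En n → EReal) : Set (En n) :=
  {x | ∀ y, (f x : EReal) + g x ≤ (f y : EReal) + g y}

/-- The prox-gradient mapping `𝒢 x = x - Prox_g (x - ∇f x)`. -/
def Gmap {n : ℕ} (f' prox : En n → En n) (x : En n) : En n :=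
  x - prox (x - f' x)

/-- For every `x`, `‖𝒢(x)‖ ≤ dist(0, ∇f(x) + ∂g(x))`, i.e.
`‖𝒢(x)‖ ≤ ‖∇f(x) + v‖` for every subgradient `v ∈ ∂g(x)`. -/
theorem norm_Gmap_le_dist_subdiff {n : ℕ}
    (f : En n → ℝ) (f' : En n → En n) (g : En n → EReal) (prox : En n → En n)
    (L₁ : ℝ) (hL₁ : 0 < L₁)
    (hfconv : ConvexOn ℝ Set.univ f)
    (hgrad : ∀ x, HasGradientAt f (f' x) x)
    (hgradcont : Continuous f')
    (hlip : ∀ x y : En n, ‖f' x - f' y‖ ≤ L₁ * ‖x - y‖)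
    (hgproper : ProperFun g) (hglsc : LowerSemicontinuous g) (hgconv : EConvexOn g)
    (hprox : IsProxMap g prox)
    (hXne : (ArgminSet f g).Nonempty)
    (x : En n) (v : En n) (hv : v ∈ ESubdiff g x) :
    ‖Gmap f' prox x‖ ≤ ‖f' x + v‖ := by
  classical
  set u : En n := x - f' x with hu
  set p : En n := prox u with hpdef
  have hp : IsProxPt g u p := (hprox u).1
  obtain ⟨y₀, hy₀⟩ := hgproper.2
  -- g x is finite
  have hgx_ne_bot : g x ≠ ⊥ := hgproper.1 x
  have hgx_ne_top : g x ≠ ⊤ := by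
    intro h
    have := hv y₀
    rw [h, EReal.top_add_of_ne_bot (EReal.coe_ne_bot _)] at this
    exact hy₀ (top_le_iff.mp this)
  -- g p is finite
  have hgp_ne_bot : g p ≠ ⊥ := hgproper.1 p
  have hgp_ne_top : g p ≠ ⊤ := by
    intro h
    have h2 := hp y₀
    obtain ⟨b, hb⟩ : ∃ b : ℝ, g y₀ = (b : EReal) :=
      ⟨(g y₀).toReal, (EReal.coe_toReal hy₀ (hgproper.1 y₀)).symm⟩
    rw [h, hb, ← EReal.coe_add, EReal.top_add_of_ne_bot (EReal.coe_ne_bot _)] at h2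
    exact (EReal.coe_ne_top _) (top_le_iff.mp h2)
  set Gp : ℝ := (g p).toReal with hGp
  set Gx : ℝ := (g x).toReal with hGx
  have hgp_eq : g p = (Gp : EReal) := (EReal.coe_toReal hgp_ne_top hgp_ne_bot).symm
  have hgx_eq : g x = (Gx : EReal) := (EReal.coe_toReal hgx_ne_top hgx_ne_bot).symm
  -- key: Gp ≤ Gx + ⟪p - u, x - p⟫
  have hkey : Gp ≤ Gx + ⟪p - u, x - p⟫ := by
    have hstep : ∀ t : ℝ, 0 < t → t ≤ 1 →
        Gp ≤ Gx + ⟪p - u, x - p⟫ + t / 2 * ‖x - p‖ ^ 2 := by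
      intro t ht ht1
      have hconv := hgconv p x (1 - t) t (by linarith) (le_of_lt ht) (by ring)
      have hy : (1 - t) • p + t • x = p + t • (x - p) := by
        module
      rw [hy, hgp_eq, hgx_eq] at hconv
      have hprox_ineq := hp (p + t • (x - p))
      rw [hgp_eq] at hprox_ineq
      have hchain : (Gp : EReal) + ((‖p - u‖ ^ 2 / 2 : ℝ) : EReal) ≤
          (((1 - t) * Gp + t * Gx + ‖p + t • (x - p) - u‖ ^ 2 / 2 : ℝ) : EReal) := by
        calc (Gp : EReal) + ((‖p - u‖ ^ 2 / 2 : ℝ) : EReal)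
            ≤ g (p + t • (x - p)) + ((‖p + t • (x - p) - u‖ ^ 2 / 2 : ℝ) : EReal) :=
              hprox_ineq
          _ ≤ ((1 - t : ℝ) : EReal) * (Gp : EReal) + (t : EReal) * (Gx : EReal) +
              ((‖p + t • (x - p) - u‖ ^ 2 / 2 : ℝ) : EReal) := by
              exact add_le_add hconv le_rfl
          _ = (((1 - t) * Gp + t * Gx + ‖p + t • (x - p) - u‖ ^ 2 / 2 : ℝ) : EReal) := by
              push_cast; ring
      have hreal : Gp + ‖p - u‖ ^ 2 / 2 ≤
          (1 - t) * Gp + t * Gx + ‖p + t • (x - p) - u‖ ^ 2 / 2 := by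
        have := hchain
        rw [← EReal.coe_add] at this
        exact_mod_cast this
      have hnorm : ‖p + t • (x - p) - u‖ ^ 2 =
          ‖p - u‖ ^ 2 + 2 * (t * ⟪p - u, x - p⟫) + t ^ 2 * ‖x - p‖ ^ 2 := by
        have h1 : p + t • (x - p) - u = (p - u) + t • (x - p) := by abel
        rw [h1, norm_add_sq_real, real_inner_smul_right, norm_smul]
        simp [abs_of_pos ht, mul_pow]
        try ring
      rw [hnorm] at hreal
      nlinarith [sq_nonneg t, sq_nonneg (‖x - p‖)]
    refine le_of_forall_pos_le_add ?_
    intro ε hε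
    set Q : ℝ := ‖x - p‖ ^ 2 with hQ
    have hQ0 : 0 ≤ Q := sq_nonneg _
    set t : ℝ := min 1 (2 * ε / (Q + 1)) with htdef
    have ht0 : 0 < t := lt_min one_pos (by positivity)
    have ht1 : t ≤ 1 := min_le_left _ _
    have h := hstep t ht0 ht1
    have htQ : t / 2 * Q ≤ ε := by
      have h1 : t ≤ 2 * ε / (Q + 1) := min_le_right _ _
      have h2 : t * Q ≤ (2 * ε / (Q + 1)) * Q :=
        mul_le_mul_of_nonneg_right h1 hQ0
      have h3 : (2 * ε / (Q + 1)) * Q ≤ 2 * ε := by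
        rw [div_mul_eq_mul_div, div_le_iff₀ (by linarith)]
        nlinarith
      linarith
    linarith
  -- subgradient at x evaluated at p
  have hsub : Gx + ⟪v, p - x⟫ ≤ Gp := by
    have := hv p
    rw [hgx_eq, hgp_eq, ← EReal.coe_add] at this
    exact_mod_cast this
  -- combine
  have hGmap : Gmap f' prox x = x - p := rfl
  rw [hGmap]
  have hpu : p - u = f' x - (x - p) := by rw [hu]; abel
  have hineq : ‖x - p‖ ^ 2 ≤ ⟪f' x + v, x - p⟫ := by
    have h1 : ⟪v, p - x⟫ ≤ ⟪p - u, x - p⟫ := by linarith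
    rw [hpu, inner_sub_left, real_inner_self_eq_norm_sq] at h1
    have h2 : ⟪v, p - x⟫ = -⟪v, x - p⟫ := by
      rw [← inner_neg_right]; congr 1; abel
    rw [inner_add_left]
    nlinarith [h1, h2]
  have hcs : ⟪f' x + v, x - p⟫ ≤ ‖f' x + v‖ * ‖x - p‖ := real_inner_le_norm _ _
  rcases eq_or_lt_of_le (norm_nonneg (x - p)) with h0 | h0
  · rw [← h0]; exact norm_nonneg _
  · have : ‖x - p‖ * ‖x - p‖ ≤ ‖f' x + v‖ * ‖x - p‖ := by
      nlinarith [hineq, hcs]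
    exact le_of_mul_le_mul_right this h0
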